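/- Let Q be a self-adjoint operator on a Hilbert space H with discrete spectrum accumulating only at ±∞ (all spectral subspaces for bounded intervals are finite dimensional), and let P be an orthogonal projection that is the identity on the spectral subspace H^{(R,∞)} and zero on H^{(−∞,−R)} for some R > 0. Set F = Q(1+Q²)^{−1/2}. Then the operator A = F − PFP − (1−P)F(1−P) has finite rank. -/

import Mathlib

/-- Let `Q` be a self-adjoint operator with discrete spectrum accumulating
only at `±∞`, diagonalized in an orthonormal eigenbasis indexed by `ι` with eigenvalues
`μ : ι → ℝ` (so all spectral subspaces for bounded intervals are finite dimensional), acting on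
`H = ℓ²(ι)`.  Let `F = Q(1+Q²)^{−1/2}` (the diagonal operator with entries
`μ i / √(1 + μ i²)`), and let `P` be an orthogonal projection that is the identity on the
spectral subspace `H^{(R,∞)}` and zero on `H^{(−∞,−R)}` for some `R > 0`.  Then
`A = F − PFP − (1−P)F(1−P)` has finite rank. -/
theorem stmt15 {ι : Type*} (μ : ι → ℝ)
    (hdisc : ∀ a b : ℝ, {i : ι | a < μ i ∧ μ i < b}.Finite)
    (R : ℝ) (hR : 0 < R)
    (Fop P : lp (fun _ : ι => ℂ) 2 →L[ℂ] lp (fun _ : ι => ℂ) 2)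
    (hF : ∀ (f : lp (fun _ : ι => ℂ) 2) (i : ι),
      Fop f i = ((μ i / Real.sqrt (1 + (μ i) ^ 2) : ℝ) : ℂ) * f i)
    (hPsa : IsSelfAdjoint P) (hPidem : P * P = P)
    (hPone : ∀ f : lp (fun _ : ι => ℂ) 2, (∀ i, μ i ≤ R → f i = 0) → P f = f)
    (hPzero : ∀ f : lp (fun _ : ι => ℂ) 2, (∀ i, -R ≤ μ i → f i = 0) → P f = 0) :
    FiniteDimensional ℂ
      ↥(LinearMap.range (Fop - P * Fop * P - (1 - P) * Fop * (1 - P)).toLinearMap) := by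
  classical
  set H := lp (fun _ : ι => ℂ) 2 with hH
  have hsym := hPsa.isSymmetric
  -- P acts as the identity on coordinates with μ i > R
  have hPhigh : ∀ (g : H) (i : ι), R < μ i → P g i = g i := by
    intro g i hi
    have he : P (lp.single 2 i (1 : ℂ)) = lp.single 2 i (1 : ℂ) := by
      refine hPone _ ?_
      intro j hj
      rcases eq_or_ne j i with rfl | h
      · exact absurd hj (not_le.2 hi)
      · exact lp.single_apply_ne 2 i 1 h
    have h1 := hsym (lp.single 2 i (1 : ℂ)) g
    simp only [ContinuousLinearMap.coe_coe] at h1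
    rw [he, lp.inner_single_left, lp.inner_single_left] at h1
    simpa using h1.symm
  -- P acts as zero on coordinates with μ i < -R
  have hPlow : ∀ (g : H) (i : ι), μ i < -R → P g i = 0 := by
    intro g i hi
    have he : P (lp.single 2 i (1 : ℂ)) = 0 := by
      refine hPzero _ ?_
      intro j hj
      rcases eq_or_ne j i with rfl | h
      · exact absurd hj (not_le.2 hi)
      · exact lp.single_apply_ne 2 i 1 h
    have h1 := hsym (lp.single 2 i (1 : ℂ)) g
    simp only [ContinuousLinearMap.coe_coe] at h1
    rw [he, lp.inner_single_left] at h1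
    simpa using h1.symm
  set Aop := Fop - P * Fop * P - (1 - P) * Fop * (1 - P) with hA
  -- the range of Aop is supported on the finite set of middle indices
  have hsupp : ∀ (f : H) (i : ι), ¬ (-R ≤ μ i ∧ μ i ≤ R) → Aop f i = 0 := by
    intro f i hi
    have happ : Aop f i = Fop f i - P (Fop (P f)) i
        - ((Fop ((1 - P) f)) i - P (Fop ((1 - P) f)) i) := by
      simp [hA, ContinuousLinearMap.sub_apply, ContinuousLinearMap.mul_apply,
        ContinuousLinearMap.one_apply, lp.coeFn_sub, Pi.sub_apply]
    rcases not_and_or.mp hi with hi | hi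
    · -- low case : μ i < -R
      have hlt : μ i < -R := not_le.mp hi
      have h1 : P (Fop (P f)) i = 0 := hPlow _ _ hlt
      have h2 : P (Fop ((1 - P) f)) i = 0 := hPlow _ _ hlt
      have h3 : ((1 - P) f : H) i = f i := by
        simp [ContinuousLinearMap.sub_apply, ContinuousLinearMap.one_apply,
          lp.coeFn_sub, Pi.sub_apply, hPlow f i hlt]
      rw [happ, h1, h2, hF, hF, h3]
      ring
    · -- high case : R < μ i
      have hlt : R < μ i := not_le.mp hi
      have h1 : P (Fop (P f)) i = Fop (P f) i := hPhigh _ _ hlt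
      have h2 : P (Fop ((1 - P) f)) i = Fop ((1 - P) f) i := hPhigh _ _ hlt
      rw [happ, h1, h2, hF, hF, hF, hPhigh f i hlt]
      ring
  -- the middle index set is finite
  have hfin : ({i : ι | -(R + 1) < μ i ∧ μ i < R + 1}).Finite := hdisc _ _
  have : Fintype ↥{i : ι | -(R + 1) < μ i ∧ μ i < R + 1} := hfin.fintype
  -- embed the range into functions on the finite middle set
  let ψ : ↥(LinearMap.range Aop.toLinearMap) →ₗ[ℂ]
      (↥{i : ι | -(R + 1) < μ i ∧ μ i < R + 1} → ℂ) :=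
    { toFun := fun x j => (x : H) j
      map_add' := by intro x y; funext j; simp [lp.coeFn_add]
      map_smul' := by intro c x; funext j; simp [lp.coeFn_smul] }
  have hinj : Function.Injective ψ := by
    intro x y hxy
    ext i
    by_cases hi : -(R + 1) < μ i ∧ μ i < R + 1
    · exact congrFun hxy ⟨i, hi⟩
    · have hx : (x : H) i = 0 := by
        obtain ⟨f, hf⟩ := x.2
        rw [← hf]
        refine hsupp f i ?_
        intro ⟨h1, h2⟩
        exact hi ⟨by linarith, by linarith⟩
      have hy : (y : H) i = 0 := by
        obtain ⟨f, hf⟩ := y.2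
        rw [← hf]
        refine hsupp f i ?_
        intro ⟨h1, h2⟩
        exact hi ⟨by linarith, by linarith⟩
      rw [hx, hy]
  exact FiniteDimensional.of_injective ψ hinj
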